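/- Let h : ℝ^n → ℝ satisfy h(x+e) + h(x−e) − 2h(x) ≤ 0 for all x ∈ ℝ^n and all e in the integer lattice E = {k₁e₁+⋯+kₙeₙ : kᵢ ∈ ℤ, not all zero}, and suppose |h| ≤ C₀ on [−1,1]^n. Define M_m = sup over [−m,m]^n of h, for positive integers m. Then M_m ≤ 2·M_{⌊(m+1)/2⌋+1} + C₀ for every positive integer m. -/

import Mathlib

/-- If `h` is concave along the integer lattice and `|h| ≤ C₀` on `[-1,1]ⁿ`, then
`M_m ≤ 2 M_{⌊(m+1)/2⌋+1} + C₀`, where `M_m = sup_{[-m,m]ⁿ} h`. -/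
theorem stmt_4 {n : ℕ} (h : EuclideanSpace ℝ (Fin n) → ℝ) (C₀ : ℝ)
    (hconc : ∀ (k : Fin n → ℤ), k ≠ 0 → ∀ x : EuclideanSpace ℝ (Fin n),
      h (x + ((WithLp.equiv 2 (Fin n → ℝ)).symm (fun i => (k i : ℝ)))) + h (x - ((WithLp.equiv 2 (Fin n → ℝ)).symm (fun i => (k i : ℝ)))) - 2 * h x ≤ 0)
    (hbd : ∀ x : EuclideanSpace ℝ (Fin n), (∀ i, |x i| ≤ 1) → |h x| ≤ C₀)
    (m : ℕ) (hm : 0 < m) :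
    sSup (h '' {x : EuclideanSpace ℝ (Fin n) | ∀ i, |x i| ≤ (m : ℝ)})
      ≤ 2 * sSup (h '' {x : EuclideanSpace ℝ (Fin n) |
          ∀ i, |x i| ≤ (((m + 1) / 2 + 1 : ℕ) : ℝ)}) + C₀ := by
  set r : ℕ := (m + 1) / 2 + 1 with hr
  have h0cube : ∀ (t : ℝ), 0 ≤ t → (∀ i, |(0 : EuclideanSpace ℝ (Fin n)) i| ≤ t) := by
    intro t ht i
    simp [ht]
  have hh0 : |h 0| ≤ C₀ := hbd 0 (h0cube 1 zero_le_one)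
  have hC₀ : 0 ≤ C₀ := le_trans (abs_nonneg _) hh0
  have h0mem₂ : h 0 ∈ h '' {x : EuclideanSpace ℝ (Fin n) | ∀ i, |x i| ≤ (r : ℝ)} :=
    ⟨0, h0cube _ (by positivity), rfl⟩
  have h0mem₁ : h 0 ∈ h '' {x : EuclideanSpace ℝ (Fin n) | ∀ i, |x i| ≤ (m : ℝ)} :=
    ⟨0, h0cube _ (by positivity), rfl⟩
  by_cases hbdd : BddAbove (h '' {x : EuclideanSpace ℝ (Fin n) | ∀ i, |x i| ≤ (r : ℝ)})
  · set M := sSup (h '' {x : EuclideanSpace ℝ (Fin n) | ∀ i, |x i| ≤ (r : ℝ)}) with hM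
    have hMC : -C₀ ≤ M := by
      have := le_csSup hbdd h0mem₂
      have := (abs_le.mp hh0).1
      linarith
    apply csSup_le ⟨h 0, h0mem₁⟩
    rintro y ⟨x, hx, rfl⟩
    set k : Fin n → ℤ := fun i => ⌊(x i + 1) / 2⌋ with hk
    have hk2 : ∀ i, |x i - 2 * (k i : ℝ)| ≤ 1 := by
      intro i
      have h1 : (k i : ℝ) ≤ (x i + 1) / 2 := Int.floor_le _
      have h2 : (x i + 1) / 2 < (k i : ℝ) + 1 := Int.lt_floor_add_one _
      rw [abs_le]
      constructor <;> linarith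
    have hr2 : (m : ℝ) + 1 ≤ 2 * (r : ℝ) := by
      have : m + 1 ≤ 2 * r := by omega
      exact_mod_cast this
    have hkmid : ∀ i, |x i - (k i : ℝ)| ≤ (r : ℝ) := by
      intro i
      have : x i - (k i : ℝ) = (x i + (x i - 2 * (k i : ℝ))) / 2 := by ring
      rw [this, abs_div]
      have := abs_add_le (x i) (x i - 2 * (k i : ℝ))
      have h1 := hx i
      have h2 := hk2 i
      rw [abs_two]
      rw [div_le_iff₀ (by norm_num : (0:ℝ) < 2)]
      linarith
    by_cases hk0 : k = 0
    · have hx1 : ∀ i, |x i| ≤ 1 := by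
        intro i
        have := hk2 i
        rw [hk0] at this
        simpa using this
      have hr1 : (1 : ℝ) ≤ (r : ℝ) := by
        have : 1 ≤ r := by omega
        exact_mod_cast this
      have : h x ≤ M := le_csSup hbdd ⟨x, fun i => le_trans (hx1 i) hr1, rfl⟩
      linarith
    · set kv : EuclideanSpace ℝ (Fin n) :=
        (WithLp.equiv 2 (Fin n → ℝ)).symm (fun i => (k i : ℝ)) with hkv
      have key := hconc k hk0 (x - kv)
      have e1 : x - kv + kv = x := by abel
      rw [e1] at key
      have hmid : h (x - kv) ≤ M := by
        refine le_csSup hbdd ⟨x - kv, fun i => ?_, rfl⟩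
        have : (x - kv) i = x i - (k i : ℝ) := by
          rfl
        rw [this]
        exact hkmid i
      have hfar : |h (x - kv - kv)| ≤ C₀ := by
        refine hbd _ fun i => ?_
        have : (x - kv - kv) i = x i - (k i : ℝ) - (k i : ℝ) := by
          rfl
        rw [this]
        have := hk2 i
        have e : x i - (k i : ℝ) - (k i : ℝ) = x i - 2 * (k i : ℝ) := by ring
        rw [e]
        exact this
      have := (abs_le.mp hfar).1
      linarith
  · rw [Real.sSup_of_not_bddAbove hbdd]
    by_cases hm1 : m = 1
    · subst hm1
      have : sSup (h '' {x : EuclideanSpace ℝ (Fin n) | ∀ i, |x i| ≤ ((1 : ℕ) : ℝ)}) ≤ C₀ := by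
        apply csSup_le ⟨h 0, h0mem₁⟩
        rintro y ⟨x, hx, rfl⟩
        exact le_trans (le_abs_self _) (hbd x (by simpa using hx))
      simpa using this
    · have hrm : r ≤ m := by omega
      have hrmR : (r : ℝ) ≤ (m : ℝ) := by exact_mod_cast hrm
      have hsub : {x : EuclideanSpace ℝ (Fin n) | ∀ i, |x i| ≤ (r : ℝ)} ⊆
          {x : EuclideanSpace ℝ (Fin n) | ∀ i, |x i| ≤ (m : ℝ)} :=
        fun x hx i => le_trans (hx i) hrmR
      have hbdd' : ¬ BddAbove (h '' {x : EuclideanSpace ℝ (Fin n) | ∀ i, |x i| ≤ (m : ℝ)}) :=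
        fun hb => hbdd (hb.mono (Set.image_mono hsub))
      rw [Real.sSup_of_not_bddAbove hbdd']
      linarith
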